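/- Let n ≥ 1 be an integer, δ > 0, and 0 < m_lo ≤ m_hi be real numbers. Let L, D ∈ ℝ^{n×n} be arbitrary real matrices. For a real m > 0 define the 2n×2n matrix Â(m) := [[0, I_n], [−(1/m)L, −(1/m)D]] (in 2×2 block form), A(m) := I_{2n} + δÂ(m), and the 2n×n matrix B(m) := δ·[[0],[(1/m)I_n]] (the column block stack of the n×n zero matrix over (1/m)I_n). Then for all m₁, m₂ ∈ [m_lo, m_hi], the 2n×2n matrix [B(m₂), A(m₂)B(m₁)], whose first n columns are B(m₂) and last n columns are A(m₂)B(m₁), satisfies |det [B(m₂), A(m₂)B(m₁)]| = δ^{3n} / (m₁ m₂)^n ≥ δ^{3n} / m_hi^{2n}. -/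

import Mathlib

/-- `Â(m) = [[0, Iₙ], [-(1/m)L, -(1/m)D]]` in `2 × 2` block form. -/
noncomputable def hatA (n : ℕ) (L D : Matrix (Fin n) (Fin n) ℝ) (m : ℝ) :
    Matrix (Fin n ⊕ Fin n) (Fin n ⊕ Fin n) ℝ :=
  Matrix.fromBlocks 0 1 (-(1 / m) • L) (-(1 / m) • D)

/-- `A(m) = I_{2n} + δ Â(m)`. -/
noncomputable def Amat (n : ℕ) (L D : Matrix (Fin n) (Fin n) ℝ) (δ m : ℝ) :
    Matrix (Fin n ⊕ Fin n) (Fin n ⊕ Fin n) ℝ :=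
  1 + δ • hatA n L D m

/-- `B(m) = δ · [[0], [(1/m) Iₙ]]`, the `2n × n` column block stack of the zero matrix
over `(1/m) Iₙ`, scaled by `δ`. -/
noncomputable def Bmat (n : ℕ) (δ m : ℝ) : Matrix (Fin n ⊕ Fin n) (Fin n) ℝ :=
  Matrix.of fun i j =>
    match i with
    | Sum.inl _ => 0
    | Sum.inr i' => δ * (if i' = j then 1 / m else 0)

open Matrix in
lemma Bmat_eq (n : ℕ) (δ m : ℝ) :
    Bmat n δ m = Matrix.fromRows 0 ((δ / m) • (1 : Matrix (Fin n) (Fin n) ℝ)) := by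
  ext (i | i) j <;>
    simp [Bmat, Matrix.one_apply, mul_ite, div_eq_mul_inv, mul_comm, mul_assoc]

open Matrix in
lemma key_det (n : ℕ) (b c : ℝ) (E : Matrix (Fin n) (Fin n) ℝ) :
    |(Matrix.fromBlocks 0 (b • (1 : Matrix (Fin n) (Fin n) ℝ))
        (c • (1 : Matrix (Fin n) (Fin n) ℝ)) E).det| = |b| ^ n * |c| ^ n := by
  set P : Matrix (Fin n ⊕ Fin n) (Fin n ⊕ Fin n) ℝ := Matrix.fromBlocks 0 1 1 0 with hP
  have hPP : P * P = 1 := by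
    simp [hP, Matrix.fromBlocks_multiply, ← Matrix.fromBlocks_one]
  have hdetP : |P.det| = 1 := by
    have : P.det * P.det = 1 := by rw [← Matrix.det_mul, hPP, Matrix.det_one]
    nlinarith [abs_nonneg P.det, sq_abs P.det]
  have hmul : (Matrix.fromBlocks 0 (b • (1 : Matrix (Fin n) (Fin n) ℝ))
        (c • (1 : Matrix (Fin n) (Fin n) ℝ)) E) * P
      = Matrix.fromBlocks (b • (1 : Matrix (Fin n) (Fin n) ℝ)) 0 E
        (c • (1 : Matrix (Fin n) (Fin n) ℝ)) := by
    simp [hP, Matrix.fromBlocks_multiply]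
  have := congrArg (fun M => |Matrix.det M|) hmul
  simp only [Matrix.det_mul, abs_mul, hdetP, mul_one] at this
  rw [this, Matrix.det_fromBlocks_zero₁₂, abs_mul,
    Matrix.det_smul, Matrix.det_smul, Matrix.det_one, mul_one, mul_one,
    abs_pow, abs_pow]
  simp [Fintype.card_fin]

theorem stmt_15 (n : ℕ) (hn : 1 ≤ n) (δ mlo mhi : ℝ) (hδ : 0 < δ)
    (hlo : 0 < mlo) (hlohi : mlo ≤ mhi)
    (L D : Matrix (Fin n) (Fin n) ℝ) :
    ∀ m₁ ∈ Set.Icc mlo mhi, ∀ m₂ ∈ Set.Icc mlo mhi,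
      |(Matrix.fromCols (Bmat n δ m₂) (Amat n L D δ m₂ * Bmat n δ m₁)).det| =
          δ ^ (3 * n) / (m₁ * m₂) ^ n ∧
        δ ^ (3 * n) / mhi ^ (2 * n) ≤ δ ^ (3 * n) / (m₁ * m₂) ^ n := by
  rintro m₁ ⟨h1lo, h1hi⟩ m₂ ⟨h2lo, h2hi⟩
  have hm₁ : 0 < m₁ := lt_of_lt_of_le hlo h1lo
  have hm₂ : 0 < m₂ := lt_of_lt_of_le hlo h2lo
  have hmhi : 0 < mhi := lt_of_lt_of_le hlo hlohi
  -- rewrite Amat as fromBlocks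
  have hA : Amat n L D δ m₂ = Matrix.fromBlocks 1 (δ • (1 : Matrix (Fin n) (Fin n) ℝ))
      (δ • (-(1 / m₂) • L)) (1 + δ • (-(1 / m₂) • D)) := by
    rw [Amat, hatA, Matrix.fromBlocks_smul, ← Matrix.fromBlocks_one,
      Matrix.fromBlocks_add]
    simp
  have hAB : Amat n L D δ m₂ * Bmat n δ m₁ =
      Matrix.fromRows ((δ * (δ / m₁)) • (1 : Matrix (Fin n) (Fin n) ℝ))
        ((δ / m₁) • (1 : Matrix (Fin n) (Fin n) ℝ) +
          (δ / m₁) • (δ • (-(1 / m₂) • D))) := by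
    rw [hA, Bmat_eq, Matrix.fromBlocks_mul_fromRows]
    congr 1
    · rw [show δ * (δ / m₁) = δ / m₁ * δ by ring]
      simp [smul_smul]
    · simp only [mul_zero, zero_add, Matrix.mul_smul, mul_one, smul_add]
  have hM : Matrix.fromCols (Bmat n δ m₂) (Amat n L D δ m₂ * Bmat n δ m₁) =
      Matrix.fromBlocks 0 ((δ * (δ / m₁)) • (1 : Matrix (Fin n) (Fin n) ℝ))
        ((δ / m₂) • (1 : Matrix (Fin n) (Fin n) ℝ))
        ((δ / m₁) • (1 : Matrix (Fin n) (Fin n) ℝ) +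
          (δ / m₁) • (δ • (-(1 / m₂) • D))) := by
    rw [hAB, Bmat_eq n δ m₂, Matrix.fromCols_fromRows_eq_fromBlocks]
  have hdet : |(Matrix.fromCols (Bmat n δ m₂) (Amat n L D δ m₂ * Bmat n δ m₁)).det|
      = δ ^ (3 * n) / (m₁ * m₂) ^ n := by
    rw [hM, key_det]
    rw [abs_of_pos (by positivity), abs_of_pos (by positivity)]
    rw [← mul_pow, show δ * (δ / m₁) * (δ / m₂) = δ ^ 3 / (m₁ * m₂) by ring,
      div_pow, ← pow_mul]
  refine ⟨hdet, ?_⟩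
  gcongr
  · calc (m₁ * m₂) ^ n ≤ (mhi * mhi) ^ n := by
          exact pow_le_pow_left₀ (by positivity)
            (mul_le_mul h1hi h2hi hm₂.le hmhi.le) n
      _ = mhi ^ (2 * n) := by rw [← sq, ← pow_mul]
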